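/- Let V be a real inner product space, let m ≥ 2 be a natural number, and let u, v ∈ V be unit vectors with ⟪u, v⟫ = cos(π/m). Let r_u and r_v denote the orthogonal reflections of V in the hyperplanes orthogonal to u and v respectively, r_u(x) = x − 2⟪x,u⟫u and r_v(x) = x − 2⟪x,v⟫v. Then the composition r_u ∘ r_v has order exactly m: (r_u ∘ r_v)^m = id, and (r_u ∘ r_v)^j ≠ id for every j with 1 ≤ j < m. -/

import Mathlib

open RealInnerProductSpace

/-- Let `V` be a real inner product space, `m ≥ 2`, and `u, v` unit vectors with
`⟪u, v⟫ = cos (π / m)`.  Let `r_u x = x − 2⟪x,u⟫u` and `r_v x = x − 2⟪x,v⟫v` be the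
orthogonal reflections in the hyperplanes orthogonal to `u` and `v`.  Then `r_u ∘ r_v`
has order exactly `m`: `(r_u ∘ r_v)^[m] = id`, and `(r_u ∘ r_v)^[j] ≠ id` for all
`1 ≤ j < m`. -/
theorem product_of_two_reflections_has_order_m
    {V : Type*} [NormedAddCommGroup V] [InnerProductSpace ℝ V]
    (m : ℕ) (hm : 2 ≤ m) (u v : V) (hu : ‖u‖ = 1) (hv : ‖v‖ = 1)
    (huv : ⟪u, v⟫ = Real.cos (Real.pi / m))
    (ru rv : V → V)
    (hru : ru = fun x => x - (2 * ⟪x, u⟫) • u)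
    (hrv : rv = fun x => x - (2 * ⟪x, v⟫) • v) :
    (ru ∘ rv)^[m] = id ∧ ∀ j : ℕ, 1 ≤ j → j < m → (ru ∘ rv)^[j] ≠ id := by
  have hmpos : 0 < m := lt_of_lt_of_le two_pos hm
  have hm0 : 0 < (m : ℝ) := by exact_mod_cast hmpos
  set θ := Real.pi / m with hθdef
  have hθpos : 0 < θ := div_pos Real.pi_pos hm0
  have hθle : θ ≤ Real.pi / 2 :=
    div_le_div_of_nonneg_left Real.pi_pos.le two_pos (by exact_mod_cast hm)
  have hθlt : θ < Real.pi := lt_of_le_of_lt hθle (by linarith [Real.pi_pos])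
  have hspos : 0 < Real.sin θ := Real.sin_pos_of_pos_of_lt_pi hθpos hθlt
  set c := Real.cos θ with hc
  set s := Real.sin θ with hs
  have hs0 : s ≠ 0 := ne_of_gt hspos
  have hs20 : s ^ 2 ≠ 0 := pow_ne_zero 2 hs0
  have hrel : s ^ 2 + c ^ 2 = 1 := Real.sin_sq_add_cos_sq θ
  have huu : ⟪u, u⟫ = 1 := by
    rw [real_inner_self_eq_norm_sq, hu]; norm_num
  have hvv : ⟪v, v⟫ = 1 := by
    rw [real_inner_self_eq_norm_sq, hv]; norm_num
  have hvu : ⟪v, u⟫ = c := by rw [real_inner_comm]; exact huv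
  have huv' : ⟪u, v⟫ = c := huv
  have hT : ∀ y : V, (ru ∘ rv) y =
      y + (-(2 * ⟪y, u⟫) + 4 * c * ⟪y, v⟫) • u + (-(2 * ⟪y, v⟫)) • v := by
    intro y
    simp only [Function.comp_apply, hru, hrv]
    rw [inner_sub_left, real_inner_smul_left, hvu]
    module
  have key : ∀ (x : V) (k : ℕ),
      (s ^ 2) • (ru ∘ rv)^[k] x = (s ^ 2) • x
        + (⟪x, u⟫ * s ^ 2 * (Real.cos (2 * k * θ) - 1)
            + s * (⟪x, v⟫ - c * ⟪x, u⟫) * Real.sin (2 * k * θ)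
            - c * (-⟪x, u⟫ * s * Real.sin (2 * k * θ)
              + (⟪x, v⟫ - c * ⟪x, u⟫) * (Real.cos (2 * k * θ) - 1))) • u
        + (-⟪x, u⟫ * s * Real.sin (2 * k * θ)
            + (⟪x, v⟫ - c * ⟪x, u⟫) * (Real.cos (2 * k * θ) - 1)) • v := by
    intro x k
    induction k with
    | zero => simp
    | succ k ih =>
      have hyu : s ^ 2 * ⟪(ru ∘ rv)^[k] x, u⟫
          = s ^ 2 * ⟪x, u⟫
            + (⟪x, u⟫ * s ^ 2 * (Real.cos (2 * k * θ) - 1)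
              + s * (⟪x, v⟫ - c * ⟪x, u⟫) * Real.sin (2 * k * θ)
              - c * (-⟪x, u⟫ * s * Real.sin (2 * k * θ)
                + (⟪x, v⟫ - c * ⟪x, u⟫) * (Real.cos (2 * k * θ) - 1)))
            + (-⟪x, u⟫ * s * Real.sin (2 * k * θ)
              + (⟪x, v⟫ - c * ⟪x, u⟫) * (Real.cos (2 * k * θ) - 1)) * c := by
        have h := congrArg (fun z : V => ⟪z, u⟫) ih
        simpa [inner_add_left, real_inner_smul_left, huu, hvu, hu] using h
      have hyv : s ^ 2 * ⟪(ru ∘ rv)^[k] x, v⟫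
          = s ^ 2 * ⟪x, v⟫
            + (⟪x, u⟫ * s ^ 2 * (Real.cos (2 * k * θ) - 1)
              + s * (⟪x, v⟫ - c * ⟪x, u⟫) * Real.sin (2 * k * θ)
              - c * (-⟪x, u⟫ * s * Real.sin (2 * k * θ)
                + (⟪x, v⟫ - c * ⟪x, u⟫) * (Real.cos (2 * k * θ) - 1))) * c
            + (-⟪x, u⟫ * s * Real.sin (2 * k * θ)
              + (⟪x, v⟫ - c * ⟪x, u⟫) * (Real.cos (2 * k * θ) - 1)) := by
        have h := congrArg (fun z : V => ⟪z, v⟫) ih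
        simpa [inner_add_left, real_inner_smul_left, hvv, huv', hv] using h
      have hk1 : 2 * ((k : ℝ) + 1) * θ = 2 * (k : ℝ) * θ + 2 * θ := by ring
      rw [Function.iterate_succ_apply', hT ((ru ∘ rv)^[k] x)]
      push_cast
      rw [hk1, Real.cos_add, Real.sin_add, Real.cos_two_mul, Real.sin_two_mul]
      rw [smul_add, smul_add, smul_smul, smul_smul, ih]
      match_scalars
      · ring
      · linear_combination (-2) * hyu + 4 * c * hyv
          + (4 * ⟪x, v⟫ * c - 2 * ⟪x, v⟫ * c * Real.cos (2 * (k : ℝ) * θ)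
            + 2 * ⟪x, u⟫ * c * s * Real.sin (2 * (k : ℝ) * θ)
            - 4 * ⟪x, u⟫ * c ^ 2 + 2 * ⟪x, u⟫ * c ^ 2 * Real.cos (2 * (k : ℝ) * θ)) * hrel
      · linear_combination (-2) * hyv + (2 * ⟪x, u⟫ * c - 2 * ⟪x, v⟫) * hrel
  constructor
  · funext x
    have h := key x m
    have h2pi : 2 * (m : ℝ) * θ = 2 * Real.pi := by
      rw [hθdef]; field_simp
    rw [h2pi, Real.cos_two_pi, Real.sin_two_pi] at h
    simp only [mul_zero, zero_mul, sub_self, mul_one, add_zero, zero_smul,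
      sub_zero, mul_zero, neg_zero, smul_zero] at h
    have h' : (s ^ 2) • (ru ∘ rv)^[m] x = (s ^ 2) • x := by
      rw [h]
    exact smul_right_injective V hs20 h'
  · intro j hj1 hj2 hid
    have h := key v j
    rw [hid] at h
    simp only [id_eq] at h
    have hh := congrArg (fun z : V => ⟪z, v⟫) h
    simp only [inner_add_left, real_inner_smul_left, huv', hvv, hvu] at hh
    have hC : s ^ 2 * (Real.cos (2 * j * θ) - 1) = 0 := by
      linear_combination -hh + (Real.cos (2 * (j : ℝ) * θ) - 1 + c ^ 2
        - c ^ 2 * Real.cos (2 * (j : ℝ) * θ)) * hrel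
    have hC1 : Real.cos (2 * j * θ) = 1 := by
      rcases mul_eq_zero.mp hC with h' | h'
      · exact absurd h' hs20
      · linarith
    have hjm : (j : ℝ) < m := by exact_mod_cast hj2
    have hj0 : (1 : ℝ) ≤ j := by exact_mod_cast hj1
    have hjpos : (0 : ℝ) < 2 * (j : ℝ) := by linarith
    have hpos : 0 < 2 * (j : ℝ) * θ := mul_pos hjpos hθpos
    have hlb : -(2 * Real.pi) < 2 * (j : ℝ) * θ := by linarith [Real.pi_pos]
    have hub : 2 * (j : ℝ) * θ < 2 * Real.pi := by
      have e : 2 * (j : ℝ) * θ = 2 * Real.pi * ((j : ℝ) / m) := by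
        rw [hθdef]; field_simp
      have hlt1 : (j : ℝ) / m < 1 := (div_lt_one hm0).mpr hjm
      have h2 := mul_lt_mul_of_pos_left hlt1 Real.two_pi_pos
      rw [e]; linarith [h2]
    have hzero := (Real.cos_eq_one_iff_of_lt_of_lt hlb hub).mp hC1
    linarith [hpos]
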